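/- Let m, n, s be positive integers with s dividing both m and n. Then Σ ∏_{i=1}^{l} (-1)^{m_i - 1} · (-1)^{(s+1)·(m_i/s)} · C(n/s, m_i/s) = C(m/s + n/s - 1, m/s), where the sum ranges over all compositions (m_1, …, m_l) of m in which every part m_i is divisible by s. -/

import Mathlib

open Finset

/-- Sum over all compositions of `M` of the product of a weight over blocks. -/
private def wsum (w : ℕ → ℤ) (M : ℕ) : ℤ :=
  ∑ c : Composition M, (c.blocks.map w).prod

private lemma comp_zero_blocks (c : Composition 0) : c.blocks = [] := by
  rcases c with ⟨blocks, hpos, hsum⟩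
  cases blocks with
  | nil => rfl
  | cons a l =>
    exfalso
    have := hpos List.mem_cons_self
    simp only [List.sum_cons] at hsum
    omega

private lemma wsum_zero (w : ℕ → ℤ) : wsum w 0 = 1 := by
  haveI : Unique (Composition 0) :=
    ⟨⟨⟨[], by simp, rfl⟩⟩, fun c => by ext1; simp [comp_zero_blocks]⟩
  rw [wsum, Fintype.sum_unique]
  simp [comp_zero_blocks]

private lemma comp_struct {M : ℕ} (hM : 0 < M) (c : Composition M) :
    c.blocks = c.blocks.headI :: c.blocks.tail ∧ 1 ≤ c.blocks.headI ∧
      c.blocks.headI ≤ M ∧ c.blocks.tail.sum = M - c.blocks.headI := by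
  have hs := c.blocks_sum
  rcases h : c.blocks with _ | ⟨a, l⟩
  · rw [h] at hs; simp at hs; omega
  · have ha : 0 < a := c.blocks_pos (by rw [h]; exact List.mem_cons_self)
    rw [h] at hs; simp only [List.sum_cons] at hs
    refine ⟨rfl, ?_, ?_, ?_⟩
    · show 1 ≤ a; omega
    · show a ≤ M; omega
    · show l.sum = M - a; omega

private lemma wsum_rec (w : ℕ → ℤ) (M : ℕ) (hM : 0 < M) :
    wsum w M = ∑ k ∈ Icc 1 M, w k * wsum w (M - k) := by
  have hR : ∑ k ∈ Icc 1 M, w k * wsum w (M - k)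
      = ∑ p ∈ (Icc 1 M).sigma (fun k => (univ : Finset (Composition (M - k)))),
          w p.1 * (p.2.blocks.map w).prod := by
    rw [Finset.sum_sigma]
    simp [wsum, Finset.mul_sum]
  rw [hR, wsum]
  refine Finset.sum_bij'
    (i := fun c _ => (⟨c.blocks.headI,
      ⟨c.blocks.tail, fun hi => c.blocks_pos (List.mem_of_mem_tail hi),
        (comp_struct hM c).2.2.2⟩⟩ : (k : ℕ) × Composition (M - k)))
    (j := fun p hp => ⟨p.1 :: p.2.blocks,
      fun hi => by
        rcases List.mem_cons.mp hi with h | h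
        · subst h; exact lt_of_lt_of_le one_pos (mem_Icc.mp (mem_sigma.mp hp).1).1
        · exact p.2.blocks_pos h,
      by
        have h1 := (mem_Icc.mp (mem_sigma.mp hp).1).1
        have h2 := (mem_Icc.mp (mem_sigma.mp hp).1).2
        have := p.2.blocks_sum
        simp only [List.sum_cons]
        omega⟩)
    ?_ ?_ ?_ ?_ ?_
  · intro c _
    rw [mem_sigma]
    exact ⟨mem_Icc.mpr ⟨(comp_struct hM c).2.1, (comp_struct hM c).2.2.1⟩, mem_univ _⟩
  · intro p hp; exact mem_univ _
  · intro c _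
    ext1
    simp only
    exact ((comp_struct hM c).1).symm
  · intro p hp
    ext1
    · simp
    · simp
  · intro c _
    conv_lhs => rw [(comp_struct hM c).1]
    simp [List.prod_cons]

private lemma coeff_one_sub_pow (N j : ℕ) :
    (PowerSeries.coeff (R := ℤ) j) ((1 - PowerSeries.X) ^ N) = (-1) ^ j * (N.choose j : ℤ) := by
  induction N generalizing j with
  | zero =>
    rw [pow_zero, PowerSeries.coeff_one]
    rcases j with _ | j <;> simp
  | succ N ih =>
    rw [pow_succ, mul_sub, mul_one, map_sub]
    rcases j with _ | j
    · rw [PowerSeries.coeff_zero_mul_X, ih]; simp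
    · rw [PowerSeries.coeff_succ_mul_X, ih, ih, Nat.choose_succ_succ]
      push_cast
      ring

private lemma key (N M : ℕ) (hN : 0 < N) (hM : 0 < M) :
    ∑ j ∈ Icc 1 M, (-1 : ℤ) ^ (j - 1) * (N.choose j : ℤ) * ((M - j + N - 1).choose (M - j) : ℤ)
      = ((M + N - 1).choose M : ℤ) := by
  obtain ⟨d, rfl⟩ : ∃ d, N = d + 1 := ⟨N - 1, by omega⟩
  have h1 := PowerSeries.mk_add_choose_mul_one_sub_pow_eq_one ℤ d
  have h2 := congrArg (PowerSeries.coeff (R := ℤ) M) h1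
  rw [PowerSeries.coeff_mul, PowerSeries.coeff_one, if_neg (by omega)] at h2
  rw [Finset.Nat.sum_antidiagonal_eq_sum_range_succ_mk] at h2
  simp only [PowerSeries.coeff_mk, coeff_one_sub_pow] at h2
  rw [← Finset.sum_range_reflect] at h2
  have h2' : ∑ j ∈ range (M+1), ((d + (M - j)).choose d : ℤ) * ((-1)^j * ((d+1).choose j : ℤ)) = 0 := by
    rw [← h2]
    refine Finset.sum_congr rfl fun j hj => ?_
    have hjM : j ≤ M := by have := Finset.mem_range.mp hj; omega
    rw [Nat.succ_sub_one, Nat.sub_sub_self hjM]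
  rw [Finset.sum_range_succ'] at h2'
  simp only [Nat.sub_zero, pow_zero, Nat.choose_zero_right, Nat.cast_one, one_mul, mul_one] at h2'
  have hIcc : ∑ j ∈ Icc 1 M,
        (-1 : ℤ) ^ (j - 1) * (((d+1).choose j : ℕ) : ℤ) * (((M - j + (d+1) - 1).choose (M - j) : ℕ) : ℤ)
      = ∑ i ∈ range M,
        (-1 : ℤ) ^ i * (((d+1).choose (i+1) : ℕ) : ℤ) * (((M - (i+1) + d).choose (M - (i+1)) : ℕ) : ℤ) := by
    refine Finset.sum_bij' (i := fun j _ => j - 1) (j := fun i _ => i + 1) ?_ ?_ ?_ ?_ ?_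
    · intro a ha; rw [mem_range]; have := mem_Icc.mp ha; omega
    · intro a ha; rw [mem_Icc]; have := mem_range.mp ha; omega
    · intro a ha; have := mem_Icc.mp ha; omega
    · intro a _; omega
    · intro a ha
      have h := mem_Icc.mp ha
      have h3 : a - 1 + 1 = a := by omega
      rw [h3]
      have h5 : M - a + (d + 1) - 1 = M - (a - 1 + 1) + d := by omega
      have h6 : M - a = M - (a - 1 + 1) := by omega
      rw [h5, h6]
  have hterm : ∀ i ∈ range M,
      (-1 : ℤ) ^ i * (((d+1).choose (i+1) : ℕ) : ℤ) * (((M - (i+1) + d).choose (M - (i+1)) : ℕ) : ℤ)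
      = -(((d + (M - (i+1))).choose d : ℤ) * ((-1)^(i+1) * (((d+1).choose (i+1) : ℕ) : ℤ))) := by
    intro i hi
    have h3 : M - (i+1) + d = d + (M - (i+1)) := by omega
    have h4 : (d + (M - (i+1))).choose d = (d + (M - (i+1))).choose (M - (i+1)) :=
      Nat.choose_symm_add
    rw [h3, ← h4]
    ring
  rw [Finset.sum_congr rfl hterm, Finset.sum_neg_distrib] at hIcc
  have h5 : M + (d + 1) - 1 = d + M := by omega
  have h6 : (d + M).choose M = (d + M).choose d := by
    rw [add_comm]; exact Nat.choose_symm_add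
  rw [hIcc, h5, h6]
  have h7 : (((d + M).choose d : ℕ) : ℤ) = ((d + (M - 0)).choose d : ℤ) := by norm_num
  rw [h7]
  linarith [h2']

private lemma sign_eq (s j : ℕ) (hs : 0 < s) (hj : 0 < j) :
    (-1 : ℤ) ^ (s * j - 1) * (-1 : ℤ) ^ ((s + 1) * j) = (-1 : ℤ) ^ (j - 1) := by
  rw [← pow_add]
  have hsj : 1 ≤ s * j := Nat.mul_pos hs hj
  have he : (s + 1) * j = s * j + j := by ring
  have h : s * j - 1 + (s + 1) * j = 2 * (s * j) + (j - 1) := by omega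
  rw [h, pow_add, pow_mul]
  norm_num

private lemma wsum_mul (s N : ℕ) (hs : 0 < s) (hN : 0 < N) (M : ℕ) :
    wsum (fun k => if s ∣ k then
        (-1 : ℤ) ^ (k - 1) * (-1 : ℤ) ^ ((s + 1) * (k / s)) * (N.choose (k / s) : ℤ) else 0)
      (s * M) = ((M + N - 1).choose M : ℤ) := by
  set w : ℕ → ℤ := fun k => if s ∣ k then
      (-1 : ℤ) ^ (k - 1) * (-1 : ℤ) ^ ((s + 1) * (k / s)) * (N.choose (k / s) : ℤ) else 0
    with hw
  induction M using Nat.strong_induction_on with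
  | _ M ih =>
    rcases Nat.eq_zero_or_pos M with rfl | hM
    · rw [Nat.mul_zero, wsum_zero]
      simp
    · rw [wsum_rec _ _ (Nat.mul_pos hs hM)]
      rw [← Finset.sum_filter_of_ne (p := fun k => s ∣ k)
        (fun x _ hx => by
          by_contra hns
          apply hx
          rw [hw]
          simp only [if_neg hns, zero_mul])]
      rw [← key N M hN hM]
      refine Finset.sum_bij' (i := fun k _ => k / s) (j := fun j _ => s * j) ?_ ?_ ?_ ?_ ?_
      · intro a ha
        obtain ⟨hI, t, rfl⟩ := Finset.mem_filter.mp ha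
        obtain ⟨h1, h2⟩ := Finset.mem_Icc.mp hI
        rw [Nat.mul_div_cancel_left t hs, Finset.mem_Icc]
        have ht : 0 < t := by
          rcases Nat.eq_zero_or_pos t with rfl | h
          · simp at h1
          · exact h
        exact ⟨ht, Nat.le_of_mul_le_mul_left h2 hs⟩
      · intro a ha
        obtain ⟨h1, h2⟩ := Finset.mem_Icc.mp ha
        rw [Finset.mem_filter, Finset.mem_Icc]
        exact ⟨⟨Nat.one_le_iff_ne_zero.mpr (by positivity), Nat.mul_le_mul_left s h2⟩,
          Dvd.intro a rfl⟩
      · intro a ha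
        obtain ⟨_, t, rfl⟩ := Finset.mem_filter.mp ha
        rw [Nat.mul_div_cancel_left t hs]
      · intro a ha
        rw [Nat.mul_div_cancel_left a hs]
      · intro a ha
        obtain ⟨hI, t, rfl⟩ := Finset.mem_filter.mp ha
        obtain ⟨h1, h2⟩ := Finset.mem_Icc.mp hI
        have ht : 0 < t := by
          rcases Nat.eq_zero_or_pos t with rfl | h
          · simp at h1
          · exact h
        have htM : t ≤ M := Nat.le_of_mul_le_mul_left h2 hs
        have hq : s * t / s = t := Nat.mul_div_cancel_left t hs
        have hww : w (s * t) = (-1 : ℤ) ^ (t - 1) * (N.choose t : ℤ) := by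
          rw [hw]
          simp only [if_pos (Dvd.intro t rfl), hq]
          rw [sign_eq s t hs ht]
        have hsub : s * M - s * t = s * (M - t) := (Nat.mul_sub s M t).symm
        rw [hww, hsub, ih (M - t) (by omega), hq]

theorem sum_compositions_divisible_parts_signed_binomial
    (m n s : ℕ) (hm : 0 < m) (hn : 0 < n) (hs : 0 < s)
    (hsm : s ∣ m) (hsn : s ∣ n) :
    ∑ c ∈ Finset.univ.filter (fun c : Composition m => ∀ i ∈ c.blocks, s ∣ i),
        (c.blocks.map fun mi =>
          (-1 : ℤ) ^ (mi - 1) * (-1 : ℤ) ^ ((s + 1) * (mi / s)) *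
            ((n / s).choose (mi / s) : ℤ)).prod =
      ((m / s + n / s - 1).choose (m / s) : ℤ) := by
  obtain ⟨M, rfl⟩ := hsm
  have hN : 0 < n / s := Nat.div_pos (Nat.le_of_dvd hn hsn) hs
  have hq : s * M / s = M := Nat.mul_div_cancel_left M hs
  rw [hq, ← wsum_mul s (n / s) hs hN M, wsum, Finset.sum_filter]
  refine Finset.sum_congr rfl fun c _ => ?_
  by_cases hc : ∀ i ∈ c.blocks, s ∣ i
  · rw [if_pos hc]
    congr 1
    refine List.map_congr_left fun a ha => ?_
    rw [if_pos (hc a ha)]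
  · rw [if_neg hc]
    push_neg at hc
    obtain ⟨i, hi, hns⟩ := hc
    symm
    apply List.prod_eq_zero
    exact List.mem_map.mpr ⟨i, hi, by simp [if_neg hns]⟩
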